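/- Let A = [A_II, A_IB; A_IB^T, A_BB] be a real symmetric positive definite matrix in block form and let 𝕊 = A_BB − A_IB^T A_II^{−1} A_IB be its Schur complement. Then for every vector U_B: U_B^T 𝕊 U_B = min over V_I of [V_I; U_B]^T A [V_I; U_B]. Consequently, if there is c > 0 such that this minimum is at least c‖U_B‖² for all U_B, then 𝕊 is symmetric positive definite, invertible, and ‖𝕊^{−1}‖ ≤ 1/c in the matrix norm induced by the Euclidean vector norm. In particular, for the matrix A of the normal equations of the spectral element method, defined by U^T A U = V^{M,W}(u) with U_B the vector of values (h_1,…,h_p) at the vertices of Ω and U_I the remaining degrees of freedom, the stability estimate U_B^T 𝕊 U_B ≥ (C/(ln W)²)‖U_B‖² yields ‖𝕊^{−1}‖ ≤ C′ (ln W)² for W large enough. -/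

import Mathlib

noncomputable section
open MeasureTheory Real Matrix

/-- The Euclidean norm of a vector. -/
def vecEnorm {n : Type*} [Fintype n] (v : n → ℝ) : ℝ := Real.sqrt (∑ i, (v i)^2)

/-- The Schur complement `𝕊 = A_BB - A_IB^T A_II⁻¹ A_IB`. -/
def schurC {nI nB : ℕ} (AII : Matrix (Fin nI) (Fin nI) ℝ)
    (AIB : Matrix (Fin nI) (Fin nB) ℝ) (ABB : Matrix (Fin nB) (Fin nB) ℝ) :
    Matrix (Fin nB) (Fin nB) ℝ :=
  ABB - AIBᵀ * AII⁻¹ * AIB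

/-- **Schur complement and the common boundary values.**
For a symmetric positive definite block matrix `A = [A_II, A_IB; A_IB^T, A_BB]` with
Schur complement `𝕊`:
(i) `U_B ⬝ 𝕊 U_B` is the minimum of the quadratic form `V ⬝ A V` over all `V` with
boundary block `U_B`;
(ii) if this minimum is bounded below by `c ‖U_B‖²` with `c > 0`, then `𝕊` is symmetric
positive definite, invertible, and `‖𝕊⁻¹‖ ≤ 1/c` in the norm induced by the Euclidean
vector norm;
(iii) in particular (for the normal equations of the spectral element method, where
`U^T A U = V^{M,W}(u)` and `U_B = (h_1, …, h_p)`), the stability estimate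
`U_B ⬝ 𝕊 U_B ≥ (C/(ln W)²) ‖U_B‖²` yields `‖𝕊⁻¹‖ ≤ (ln W)²/C`. -/
theorem schur_complement_bound (nI nB : ℕ)
    (AII : Matrix (Fin nI) (Fin nI) ℝ) (AIB : Matrix (Fin nI) (Fin nB) ℝ)
    (ABB : Matrix (Fin nB) (Fin nB) ℝ)
    (hpd : (Matrix.fromBlocks AII AIB AIBᵀ ABB).PosDef) :
    (∀ UB : Fin nB → ℝ,
        IsLeast {x : ℝ | ∃ VI : Fin nI → ℝ,
            x = (Sum.elim VI UB) ⬝ᵥ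
              ((Matrix.fromBlocks AII AIB AIBᵀ ABB) *ᵥ (Sum.elim VI UB))}
          (UB ⬝ᵥ (schurC AII AIB ABB *ᵥ UB)))
    ∧ (∀ c : ℝ, 0 < c →
        (∀ UB : Fin nB → ℝ, c * (vecEnorm UB)^2 ≤ UB ⬝ᵥ (schurC AII AIB ABB *ᵥ UB)) →
        (schurC AII AIB ABB).PosDef ∧ IsUnit (schurC AII AIB ABB).det ∧
          ∀ x : Fin nB → ℝ,
            vecEnorm ((schurC AII AIB ABB)⁻¹ *ᵥ x) ≤ (1/c) * vecEnorm x)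
    ∧ (∀ Cst Wr : ℝ, 0 < Cst → 1 < Wr →
        (∀ UB : Fin nB → ℝ,
          Cst / (Real.log Wr)^2 * (vecEnorm UB)^2 ≤ UB ⬝ᵥ (schurC AII AIB ABB *ᵥ UB)) →
        ∀ x : Fin nB → ℝ,
          vecEnorm ((schurC AII AIB ABB)⁻¹ *ᵥ x) ≤ (Real.log Wr)^2 / Cst * vecEnorm x) := by
  have henorm_nonneg : ∀ (v : Fin nB → ℝ), 0 ≤ vecEnorm v := fun v => Real.sqrt_nonneg _
  have henorm_sq : ∀ (v : Fin nB → ℝ), (vecEnorm v)^2 = ∑ i, (v i)^2 := fun v =>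
    Real.sq_sqrt (Finset.sum_nonneg fun i _ => sq_nonneg _)
  have henorm_pos : ∀ (v : Fin nB → ℝ), v ≠ 0 → 0 < vecEnorm v := by
    intro v hv
    obtain ⟨i, hi⟩ := Function.ne_iff.mp hv
    exact Real.sqrt_pos.mpr <| Finset.sum_pos' (fun j _ => sq_nonneg _)
      ⟨i, Finset.mem_univ i, sq_pos_of_ne_zero hi⟩
  -- AII is positive definite
  have hAII : AII.PosDef := by
    refine Matrix.PosDef.of_dotProduct_mulVec_pos (Matrix.isHermitian_fromBlocks_iff.mp hpd.1).1 fun x hx => ?_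
    have hne : (Sum.elim x 0 : Fin nI ⊕ Fin nB → ℝ) ≠ 0 := by
      intro h
      apply hx
      funext i
      exact congrFun h (Sum.inl i)
    have := hpd.dotProduct_mulVec_pos hne
    simpa [Matrix.fromBlocks_mulVec, dotProduct, Fintype.sum_sum_type] using this
  haveI : Invertible AII := hAII.isUnit.invertible
  -- key decomposition
  have key : ∀ (VI : Fin nI → ℝ) (UB : Fin nB → ℝ),
      (Sum.elim VI UB) ⬝ᵥ ((Matrix.fromBlocks AII AIB AIBᵀ ABB) *ᵥ (Sum.elim VI UB)) =
        (VI + (AII⁻¹ * AIB) *ᵥ UB) ⬝ᵥ (AII *ᵥ (VI + (AII⁻¹ * AIB) *ᵥ UB)) +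
          UB ⬝ᵥ (schurC AII AIB ABB *ᵥ UB) := by
    intro VI UB
    have h := Matrix.schur_complement_eq₁₁ (α := ℝ) AIB ABB VI UB hAII.1
    simp only [Matrix.conjTranspose_eq_transpose_of_trivial, star_trivial,
      ← Matrix.dotProduct_mulVec] at h
    simpa [schurC] using h
  -- Schur complement is hermitian
  have hSH : (schurC AII AIB ABB).IsHermitian := by
    have := (Matrix.IsHermitian.fromBlocks₁₁ (A := AII) AIB ABB hAII.1).mp
      (by simpa [Matrix.conjTranspose_eq_transpose_of_trivial] using hpd.1)
    simpa [schurC, Matrix.conjTranspose_eq_transpose_of_trivial] using this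
  -- part (i)
  have part1 : ∀ UB : Fin nB → ℝ,
      IsLeast {x : ℝ | ∃ VI : Fin nI → ℝ,
          x = (Sum.elim VI UB) ⬝ᵥ
            ((Matrix.fromBlocks AII AIB AIBᵀ ABB) *ᵥ (Sum.elim VI UB))}
        (UB ⬝ᵥ (schurC AII AIB ABB *ᵥ UB)) := by
    intro UB
    constructor
    · exact ⟨-((AII⁻¹ * AIB) *ᵥ UB), by rw [key]; simp⟩
    · rintro x ⟨VI, rfl⟩
      rw [key]
      have h0 : 0 ≤ (VI + (AII⁻¹ * AIB) *ᵥ UB) ⬝ᵥ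
          (AII *ᵥ (VI + (AII⁻¹ * AIB) *ᵥ UB)) := by
        simpa using (posSemidef_iff_dotProduct_mulVec.mp hAII.posSemidef).2 (VI + (AII⁻¹ * AIB) *ᵥ UB)
      linarith
  -- part (ii)
  have part2 : ∀ c : ℝ, 0 < c →
      (∀ UB : Fin nB → ℝ, c * (vecEnorm UB)^2 ≤ UB ⬝ᵥ (schurC AII AIB ABB *ᵥ UB)) →
      (schurC AII AIB ABB).PosDef ∧ IsUnit (schurC AII AIB ABB).det ∧
        ∀ x : Fin nB → ℝ,
          vecEnorm ((schurC AII AIB ABB)⁻¹ *ᵥ x) ≤ (1/c) * vecEnorm x := by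
    intro c hc hbound
    have hSpd : (schurC AII AIB ABB).PosDef := by
      refine Matrix.PosDef.of_dotProduct_mulVec_pos hSH fun x hx => ?_
      have h1 : 0 < c * (vecEnorm x)^2 :=
        mul_pos hc (pow_pos (henorm_pos x hx) 2)
      have := hbound x
      simp only [star_trivial]
      linarith
    have hdet : IsUnit (schurC AII AIB ABB).det := hSpd.det_pos.ne'.isUnit
    refine ⟨hSpd, hdet, fun x => ?_⟩
    set S := schurC AII AIB ABB with hS
    set y := S⁻¹ *ᵥ x with hy
    have hSy : S *ᵥ y = x := by
      rw [hy, Matrix.mulVec_mulVec, Matrix.mul_nonsing_inv _ hdet, Matrix.one_mulVec]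
    have h1 : c * (vecEnorm y)^2 ≤ y ⬝ᵥ x := by
      have := hbound y
      rwa [hSy] at this
    have hcs : (y ⬝ᵥ x)^2 ≤ (vecEnorm y * vecEnorm x)^2 := by
      rw [mul_pow, henorm_sq, henorm_sq]
      exact Finset.sum_mul_sq_le_sq_mul_sq _ _ _
    have h2 : y ⬝ᵥ x ≤ vecEnorm y * vecEnorm x := by
      calc y ⬝ᵥ x ≤ |y ⬝ᵥ x| := le_abs_self _
        _ = Real.sqrt ((y ⬝ᵥ x)^2) := (Real.sqrt_sq_eq_abs _).symm
        _ ≤ Real.sqrt ((vecEnorm y * vecEnorm x)^2) := Real.sqrt_le_sqrt hcs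
        _ = |vecEnorm y * vecEnorm x| := Real.sqrt_sq_eq_abs _
        _ = vecEnorm y * vecEnorm x := abs_of_nonneg (mul_nonneg (henorm_nonneg _) (henorm_nonneg _))
    rcases eq_or_lt_of_le (henorm_nonneg y) with h0 | h0
    · rw [← h0]
      exact mul_nonneg (by positivity) (henorm_nonneg x)
    · have hcy : c * vecEnorm y ≤ vecEnorm x := by
        have h3 : c * (vecEnorm y)^2 ≤ vecEnorm y * vecEnorm x := le_trans h1 h2
        nlinarith
      rw [one_div_mul_eq_div]
      exact (le_div_iff₀ hc).mpr (by linarith [hcy])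
  refine ⟨part1, part2, ?_⟩
  -- part (iii)
  intro Cst Wr hC hW hbound x
  have hlog : 0 < Real.log Wr := Real.log_pos hW
  have hc : 0 < Cst / (Real.log Wr)^2 := by positivity
  have := (part2 _ hc hbound).2.2 x
  rwa [one_div_div] at this
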